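/- arXiv:2201.10613 — 2 statements merged into one kernel-verified Lean document; each statement's English description precedes it below -/
import Mathlib

section
/- If A and B are nontrivial groups and N is a normal subgroup of A * B that is conjugate to a subgroup of A, then N is trivial. -/
open Monoid Monoid.Coprod

lemma coprodI_of_mul_of_ne {ι : Type*} [DecidableEq ι] {M : ι → Type*} [∀ i, Group (M i)]
    {i j : ι} (hij : i ≠ j) {a : M i} {b : M j} (ha : a ≠ 1) (hb : b ≠ 1) :
    CoprodI.of a * CoprodI.of b ≠ CoprodI.of b * CoprodI.of a := by
  classical
  intro hcomm
  have hne1 : ∀ l ∈ [(⟨i, a⟩ : Σ k, M k), ⟨j, b⟩], l.snd ≠ 1 := by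
    intro l hl
    rcases List.mem_pair.mp hl with rfl | rfl
    · exact ha
    · exact hb
  have hne2 : ∀ l ∈ [(⟨j, b⟩ : Σ k, M k), ⟨i, a⟩], l.snd ≠ 1 := by
    intro l hl
    rcases List.mem_pair.mp hl with rfl | rfl
    · exact hb
    · exact ha
  let w1 : CoprodI.Word M := ⟨[⟨i, a⟩, ⟨j, b⟩], hne1, by simpa using hij⟩
  let w2 : CoprodI.Word M := ⟨[⟨j, b⟩, ⟨i, a⟩], hne2, by simpa using hij.symm⟩
  have hprod : w1.prod = w2.prod := by
    simp only [CoprodI.Word.prod, w1, w2, List.map_cons, List.map_nil, List.prod_cons,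
      List.prod_nil, mul_one]
    exact hcomm
  have hinj : Function.Injective (CoprodI.Word.prod : CoprodI.Word M → CoprodI M) :=
    (CoprodI.Word.equiv (M := M)).symm.injective
  have hlists := congrArg (fun w : CoprodI.Word M => w.toList) (hinj hprod)
  simp only [w1, w2] at hlists
  have : (⟨i, a⟩ : Σ k, M k) = ⟨j, b⟩ := by
    have := congrArg List.head? hlists
    simpa using this
  exact hij (congrArg Sigma.fst this)

/-- In a binary free product of groups, `inl a` commutes with `inr b` for some `b ≠ 1`
only if `a = 1`. -/
lemma coprod_inl_eq_one_of_comm {A : Type u} {B : Type v} [Group A] [Group B]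
    {a : A} {b : B} (hb : b ≠ 1)
    (hcomm : (Coprod.inl a : A ∗ B) * Coprod.inr b = Coprod.inr b * Coprod.inl a) : a = 1 := by
  classical
  let M : Bool → Type (max u v) := fun k => cond k (ULift.{v} A) (ULift.{u} B)
  letI : ∀ k, Group (M k) := fun k => by
    cases k
    · exact (inferInstance : Group (ULift B))
    · exact (inferInstance : Group (ULift A))
  let eA : A →* M true := (MulEquiv.ulift (α := A)).symm.toMonoidHom
  let eB : B →* M false := (MulEquiv.ulift (α := B)).symm.toMonoidHom
  let f : A ∗ B →* CoprodI M :=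
    Coprod.lift ((CoprodI.of (M := M) (i := true)).comp eA)
      ((CoprodI.of (M := M) (i := false)).comp eB)
  by_contra ha
  have ha2 : eA a ≠ 1 := fun h1 =>
    ha ((MulEquiv.ulift (α := A)).symm.injective (h1.trans (map_one _).symm))
  have hb2 : eB b ≠ 1 := fun h1 =>
    hb ((MulEquiv.ulift (α := B)).symm.injective (h1.trans (map_one _).symm))
  have hcomm' : CoprodI.of (M := M) (eA a) * CoprodI.of (M := M) (eB b) =
      CoprodI.of (M := M) (eB b) * CoprodI.of (M := M) (eA a) := by
    have := congrArg f hcomm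
    simpa [f] using this
  exact coprodI_of_mul_of_ne (M := M) (i := true) (j := false) (by simp) ha2 hb2 hcomm'

/-- A normal subgroup of a nontrivial free product which is conjugate into one factor is
trivial. -/
theorem normal_subgroup_conjugate_into_factor_eq_bot {A B : Type*} [Group A] [Group B]
    [Nontrivial A] [Nontrivial B] (N : Subgroup (A ∗ B)) [N.Normal]
    (g : A ∗ B) (h : N.map (MulAut.conj g).toMonoidHom ≤ (Coprod.inl : A →* A ∗ B).range) :
    N = ⊥ := by
  classical
  -- N is contained in the range of `inl`
  have hN : N ≤ (Coprod.inl : A →* A ∗ B).range := by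
    intro x hx
    have hx' : g⁻¹ * x * g ∈ N := by
      have := Subgroup.Normal.conj_mem ‹N.Normal› x hx g⁻¹
      simpa using this
    have := h ⟨g⁻¹ * x * g, hx', rfl⟩
    simpa [mul_assoc] using this
  refine (Subgroup.eq_bot_iff_forall _).mpr fun x hx => ?_
  obtain ⟨a, rfl⟩ := hN hx
  obtain ⟨b, hb⟩ := exists_ne (1 : B)
  have hc : Coprod.inr b * Coprod.inl a * (Coprod.inr b)⁻¹ ∈ N :=
    Subgroup.Normal.conj_mem ‹N.Normal› _ hx (Coprod.inr b)
  obtain ⟨a', ha'⟩ := hN hc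
  have haa : a' = a := by
    have := congrArg (Coprod.fst : A ∗ B →* A) ha'
    simpa using this
  rw [haa] at ha'
  have hcomm : (Coprod.inl a : A ∗ B) * Coprod.inr b = Coprod.inr b * Coprod.inl a := by
    have h2 := ha'.symm
    rw [mul_inv_eq_iff_eq_mul] at h2
    exact h2.symm
  rw [coprod_inl_eq_one_of_comm hb hcomm, map_one]
end

section
/- If a group G contains an infinite cyclic subgroup of finite index, then G has at most two ends and every finitely generated subgroup of infinite index in G is finite; in particular any normal subgroup N of G with G/N infinite is finite. -/
/-- An infinite subgroup of `Multiplicative ℤ` has nonzero (i.e. finite) index. -/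
lemma aux_int_subgroup_index (K : Subgroup (Multiplicative ℤ)) (hK : Infinite K) :
    K.index ≠ 0 := by
  obtain ⟨a, ha⟩ := Int.subgroup_cyclic (Subgroup.toAddSubgroup' K)
  rw [← AddSubgroup.zmultiples_eq_closure] at ha
  have hKa : K = AddSubgroup.toSubgroup (AddSubgroup.zmultiples a) := by
    have := congrArg Subgroup.toAddSubgroup'.symm ha
    simpa using this
  have hidx : K.index = (AddSubgroup.zmultiples a).index := by
    rw [hKa, AddSubgroup.index_toSubgroup]
  rw [hidx, Int.index_zmultiples]
  intro h0
  have ha0 : a = 0 := Int.natAbs_eq_zero.mp h0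
  subst ha0
  rw [AddSubgroup.zmultiples_zero_eq_bot] at hKa
  have : K = ⊥ := by simpa using hKa
  rw [this] at hK
  exact not_finite (⊥ : Subgroup (Multiplicative ℤ))

/-- An infinite subgroup of a group isomorphic to `ℤ` has nonzero index. -/
lemma aux_iso_int_subgroup_index {A : Type*} [Group A] (e : A ≃* Multiplicative ℤ)
    (K : Subgroup A) (hK : Infinite K) : K.index ≠ 0 := by
  haveI := hK
  have h1 : Infinite (K.map e.toMonoidHom) :=
    (Subgroup.equivMapOfInjective K e.toMonoidHom e.injective).toEquiv.infinite_iff.mp hK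
  have h2 : (K.map e.toMonoidHom).index ≠ 0 := aux_int_subgroup_index _ h1
  have h3 : ((K.map e.toMonoidHom).comap e.toMonoidHom).index = (K.map e.toMonoidHom).index :=
    Subgroup.index_comap_of_surjective _ e.surjective
  rw [Subgroup.comap_map_eq_self_of_injective e.injective] at h3
  exact h3 ▸ h2

/-- Key lemma: in a virtually-ℤ group (with normal witness), every infinite subgroup
has finite index. -/
lemma aux_key {G : Type*} [Group G] (C' : Subgroup G) [hn : C'.Normal]
    (hfi : C'.index ≠ 0) (e : C' ≃* Multiplicative ℤ)
    (H : Subgroup G) (hH : Infinite H) : H.index ≠ 0 := by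
  haveI := hH
  have hrel : C'.relIndex H ≠ 0 := fun h =>
    hfi (Nat.eq_zero_of_zero_dvd (h ▸ Subgroup.relIndex_dvd_index_of_normal C' H))
  -- L = H ⊓ C' is infinite
  have hLinf : Infinite (H ⊓ C' : Subgroup G) := by
    rw [← not_finite_iff_infinite]
    intro hfin
    haveI := hfin
    have hidx : ((H ⊓ C').subgroupOf H).index ≠ 0 := by
      show (H ⊓ C').relIndex H ≠ 0
      rwa [inf_comm, Subgroup.inf_relIndex_right]
    have hcard : Nat.card ((H ⊓ C').subgroupOf H) ≠ 0 := by
      have : Nat.card ((H ⊓ C').subgroupOf H) = Nat.card (H ⊓ C' : Subgroup G) :=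
        Nat.card_congr (Subgroup.subgroupOfEquivOfLe inf_le_left).toEquiv
      rw [this]
      exact Nat.card_pos.ne'
    have := Subgroup.index_mul_card ((H ⊓ C').subgroupOf H)
    have hne : Nat.card H ≠ 0 := by
      rw [← this]; exact mul_ne_zero hidx hcard
    haveI := Nat.finite_of_card_ne_zero hne
    exact not_finite H
  -- its copy inside C' is infinite, hence has finite index in C'
  have hL'inf : Infinite ((H ⊓ C').subgroupOf C') :=
    (Subgroup.subgroupOfEquivOfLe (inf_le_right : H ⊓ C' ≤ C')).toEquiv.infinite_iff.mpr hLinf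
  have h1 : (H ⊓ C').relIndex C' ≠ 0 := aux_iso_int_subgroup_index e _ hL'inf
  have h2 : (H ⊓ C').index ≠ 0 := by
    rw [← Subgroup.relIndex_mul_index (inf_le_right : H ⊓ C' ≤ C')]
    exact mul_ne_zero h1 hfi
  exact fun h => h2 (Nat.eq_zero_of_zero_dvd (h ▸ Subgroup.index_dvd_of_le inf_le_left))

/-- If `G` contains an infinite cyclic subgroup of finite index, then `G` has at most two
ends (equivalently, `G` is finite or contains a finite-index normal infinite cyclic
subgroup), every finitely generated subgroup of infinite index in `G` is finite, and any
normal subgroup `N` with `G/N` infinite is finite. -/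
theorem virtually_cyclic_structure {G : Type*} [Group G] (C : Subgroup G)
    (hfi : C.index ≠ 0) (hC : Nonempty (C ≃* Multiplicative ℤ)) :
    (Finite G ∨ ∃ C' : Subgroup G, C'.Normal ∧ C'.index ≠ 0 ∧
        Nonempty (C' ≃* Multiplicative ℤ)) ∧
    (∀ H : Subgroup G, H.FG → H.index = 0 → Finite H) ∧
    (∀ N : Subgroup G, N.Normal → Infinite (G ⧸ N) → Finite N) := by
  obtain ⟨e⟩ := hC
  have hCinf : Infinite C := e.symm.toEquiv.infinite_iff.mp inferInstance
  have hGinf : Infinite G := Infinite.of_injective _ C.subtype_injective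
  -- the normal core of C
  haveI : C.FiniteIndex := ⟨hfi⟩
  have hcorefi : C.normalCore.index ≠ 0 := Subgroup.FiniteIndex.index_ne_zero
  have hcoreinf : Infinite C.normalCore := by
    rw [← not_finite_iff_infinite]
    intro hfin
    haveI := hfin
    have := Subgroup.index_mul_card C.normalCore
    rw [show Nat.card G = 0 from Nat.card_eq_zero_of_infinite] at this
    rcases Nat.mul_eq_zero.mp this with h | h
    · exact hcorefi h
    · exact Nat.card_pos.ne' h
  haveI : IsCyclic C := isCyclic_of_surjective e.symm.toMonoidHom e.symm.surjective
  haveI : IsCyclic C.normalCore := Subgroup.isCyclic_of_le C.normalCore_le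
  have ecore : C.normalCore ≃* Multiplicative ℤ :=
    mulEquivOfCyclicCardEq (by rw [Nat.card_eq_zero_of_infinite, Nat.card_eq_zero_of_infinite])
  haveI hnormal : C.normalCore.Normal := Subgroup.normalCore_normal C
  -- main finiteness statement
  have main : ∀ H : Subgroup G, H.index = 0 → Finite H := by
    intro H hidx
    rw [← not_infinite_iff_finite]
    intro hinf
    exact aux_key C.normalCore hcorefi ecore H hinf hidx
  refine ⟨Or.inr ⟨C.normalCore, hnormal, hcorefi, ⟨ecore⟩⟩, fun H _ h => main H h, ?_⟩
  intro N _ hinf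
  exact main N (by rw [Subgroup.index]; exact Nat.card_eq_zero_of_infinite)
end
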